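/- Let S be a convex compact subset of ℝ^M, U a finite set of modes, and for each u ∈ U let f_u : ℝ^M → ℝ^M be Lipschitz on S with constant L_u and satisfy the one-sided Lipschitz condition on S with constant λ_u < 0. Set C_u = sup_{y∈S} L_u·‖f_u(y)‖, and for ε > 0 set G_u = √3·ε·|λ_u|/C_u and α_u = 1 + |λ_u|·G_u/4 − √(1 + (λ_u·G_u/4)²). Assume hypothesis (H): for all u ∈ U, λ_u < 0, |λ_u|·G_u/4 < 1 and τ ≤ G_u·(1 − α_u). Let π = u₁⋯u_k ∈ U^k be a pattern, let y : [0, kτ] → S be the piecewise solution satisfying y′(t) = f_{u_n}(y(t)) for t ∈ [(n−1)τ, nτ] (n = 1,…,k), and let ỹ : [0, kτ] → S be the piecewise-linear Euler trajectory defined by z₀ given, ỹ(t) = z_{n−1} + (t − (n−1)τ)·f_{u_n}(z_{n−1}) for t ∈ [(n−1)τ, nτ] and z_n = z_{n−1} + τ·f_{u_n}(z_{n−1}), assumed to remain in S. If ‖y(0) − z₀‖ ≤ ε, then ‖y(t) − ỹ(t)‖ ≤ ε for all t ∈ [0, kτ]. -/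

import Mathlib

open Set Real
open scoped RealInnerProductSpace

set_option maxHeartbeats 1000000

lemma euler_step {M : ℕ} {S : Set (EuclideanSpace ℝ (Fin M))}
    (g : EuclideanSpace ℝ (Fin M) → EuclideanSpace ℝ (Fin M))
    (Lu C μ β ε τ a : ℝ) (hε : 0 < ε) (hμ : 0 < μ) (hβ : 0 ≤ β)
    (hLip : ∀ y₁ ∈ S, ∀ y₂ ∈ S, ‖g y₁ - g y₂‖ ≤ Lu * ‖y₁ - y₂‖)
    (hOSL : ∀ y₁ ∈ S, ∀ y₂ ∈ S, ⟪g y₁ - g y₂, y₁ - y₂⟫ ≤ (-μ) * ‖y₁ - y₂‖ ^ 2)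
    (z₀ : EuclideanSpace ℝ (Fin M)) (hz₀ : z₀ ∈ S)
    (hCz : Lu * ‖g z₀‖ ≤ C)
    (hYoung : C ^ 2 / μ ≤ ε ^ 2 * (μ ^ 3 / 2 + 3 * β))
    (hcon : μ ^ 2 * τ / 2 + β * τ ^ 2 ≤ μ)
    (y : ℝ → EuclideanSpace ℝ (Fin M))
    (hyS : ∀ t ∈ Icc a (a + τ), y t ∈ S)
    (hy' : ∀ t ∈ Icc a (a + τ), HasDerivAt y (g (y t)) t)
    (hlinS : ∀ t ∈ Icc a (a + τ), z₀ + (t - a) • g z₀ ∈ S)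
    (hinit : ‖y a - z₀‖ ≤ ε) :
    ∀ t ∈ Icc a (a + τ), ‖y t - (z₀ + (t - a) • g z₀)‖ ≤ ε := by
  intro t ht
  have hτ0 : 0 ≤ τ := by linarith [ht.1, ht.2]
  set Y : ℝ → EuclideanSpace ℝ (Fin M) := fun u => y u - (z₀ + (u - a) • g z₀) with hY
  set gg : ℝ → ℝ := fun u => ⟪Y u, Y u⟫ with hggdef
  set q : ℝ → ℝ := fun u => 1 - μ*(u-a) + μ^2*(u-a)^2/2 + β*(u-a)^3 with hqdef
  set φ : ℝ → ℝ := fun u => (gg u - ε^2 * q u) * Real.exp (μ*(u-a)) with hφdef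
  -- derivative facts (built while definitions are transparent)
  have hY' : ∀ u ∈ Icc a (a+τ), HasDerivAt Y (g (y u) - g z₀) u := by
    intro u hu
    have h1 : HasDerivAt (fun v : ℝ => (v - a) • g z₀) ((1:ℝ) • g z₀) u :=
      ((hasDerivAt_id u).sub_const a).smul_const (g z₀)
    have h2 : HasDerivAt (fun v : ℝ => z₀ + (v - a) • g z₀) (g z₀) u := by
      simpa using h1.const_add z₀
    exact (hy' u hu).sub h2
  have hgg' : ∀ u ∈ Icc a (a+τ),
      HasDerivAt gg (2 * ⟪g (y u) - g z₀, Y u⟫) u := by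
    intro u hu
    have := (hY' u hu).inner ℝ (hY' u hu)
    have h2 : ⟪Y u, g (y u) - g z₀⟫ + ⟪g (y u) - g z₀, Y u⟫
        = 2 * ⟪g (y u) - g z₀, Y u⟫ := by
      rw [real_inner_comm]; ring
    rw [h2] at this; exact this
  have hq' : ∀ u : ℝ, HasDerivAt q (-μ + μ^2*(u-a) + 3*β*(u-a)^2) u := by
    intro u
    have h0 : HasDerivAt (fun v : ℝ => v - a) 1 u := (hasDerivAt_id u).sub_const a
    have h2 : HasDerivAt (fun v : ℝ => (v-a)^2) (2*(u-a)) u := by simpa using h0.fun_pow 2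
    have h3 : HasDerivAt (fun v : ℝ => (v-a)^3) (3*(u-a)^2) u := by simpa using h0.fun_pow 3
    have := (((h0.const_mul μ).const_sub 1).fun_add ((h2.const_mul (μ^2)).div_const 2)).fun_add
      (h3.const_mul β)
    exact this.congr_deriv (by ring)
  have hE : ∀ u : ℝ, HasDerivAt (fun v : ℝ => Real.exp (μ*(v-a))) (Real.exp (μ*(u-a)) * μ) u := by
    intro u
    have h0 : HasDerivAt (fun v : ℝ => μ*(v - a)) μ u := by
      simpa using ((hasDerivAt_id u).sub_const a).const_mul μ
    exact h0.exp
  have hφ' : ∀ u ∈ Icc a (a+τ), HasDerivAt φ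
      (((2 * ⟪g (y u) - g z₀, Y u⟫ - ε^2 * (-μ + μ^2*(u-a) + 3*β*(u-a)^2)) * Real.exp (μ*(u-a)))
        + (gg u - ε^2 * q u) * (Real.exp (μ*(u-a)) * μ)) u := by
    intro u hu
    exact ((hgg' u hu).sub ((hq' u).const_mul (ε^2))).mul (hE u)
  -- pointwise equation facts
  have hYval : ∀ u : ℝ, Y u = y u - (z₀ + (u - a) • g z₀) := fun _ => rfl
  have hggval : ∀ u : ℝ, gg u = ‖Y u‖^2 := fun u => real_inner_self_eq_norm_sq _
  have hqval : ∀ u : ℝ, q u = 1 - μ*(u-a) + μ^2*(u-a)^2/2 + β*(u-a)^3 := fun _ => rfl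
  have hφval : ∀ u : ℝ, φ u = (gg u - ε^2 * q u) * Real.exp (μ*(u-a)) := fun _ => rfl
  clear_value Y gg q φ
  clear hY hggdef hqdef hφdef
  -- the derivative is nonpositive on the interval
  have hderiv_nonpos : ∀ u ∈ Icc a (a+τ),
      ((2 * ⟪g (y u) - g z₀, Y u⟫ - ε^2 * (-μ + μ^2*(u-a) + 3*β*(u-a)^2)) * Real.exp (μ*(u-a)))
        + (gg u - ε^2 * q u) * (Real.exp (μ*(u-a)) * μ) ≤ 0 := by
    intro u hu
    obtain ⟨s, hs⟩ : ∃ s : ℝ, s = u - a := ⟨_, rfl⟩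
    have hs0 : 0 ≤ s := by rw [hs]; linarith [hu.1]
    have hsτ : s ≤ τ := by rw [hs]; linarith [hu.2]
    obtain ⟨w, hw⟩ : ∃ w : EuclideanSpace ℝ (Fin M), w = z₀ + (u - a) • g z₀ := ⟨_, rfl⟩
    have hwS : w ∈ S := hw ▸ hlinS u hu
    have hyuS : y u ∈ S := hyS u hu
    have hYw : Y u = y u - w := by rw [hYval, hw]
    obtain ⟨δ, hδ⟩ : ∃ δ : ℝ, δ = ‖Y u‖ := ⟨_, rfl⟩
    have hδ0 : 0 ≤ δ := hδ ▸ norm_nonneg _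
    have hggδ : gg u = δ^2 := by rw [hggval, hδ]
    have hsplit : ⟪g (y u) - g z₀, Y u⟫ = ⟪g (y u) - g w, Y u⟫ + ⟪g w - g z₀, Y u⟫ := by
      rw [← inner_add_left, sub_add_sub_cancel]
    have h1 : ⟪g (y u) - g w, Y u⟫ ≤ (-μ) * δ^2 := by
      have := hOSL (y u) hyuS w hwS
      rwa [← hYw, ← hδ] at this
    have h2 : ⟪g w - g z₀, Y u⟫ ≤ C * s * δ := by
      have hcs : ⟪g w - g z₀, Y u⟫ ≤ ‖g w - g z₀‖ * ‖Y u‖ := real_inner_le_norm _ _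
      have hlip : ‖g w - g z₀‖ ≤ Lu * ‖w - z₀‖ := hLip w hwS z₀ hz₀
      have hwz : ‖w - z₀‖ = s * ‖g z₀‖ := by
        have h0 : 0 ≤ u - a := by rw [← hs]; exact hs0
        rw [hw, hs, add_sub_cancel_left, norm_smul, Real.norm_eq_abs, abs_of_nonneg h0]
      have hmid : ‖g w - g z₀‖ * δ ≤ Lu * ‖g z₀‖ * (s * δ) := by
        calc ‖g w - g z₀‖ * δ ≤ Lu * ‖w - z₀‖ * δ := mul_le_mul_of_nonneg_right hlip hδ0
          _ = Lu * ‖g z₀‖ * (s * δ) := by rw [hwz]; ring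
      have h3 : Lu * ‖g z₀‖ * (s * δ) ≤ C * (s * δ) :=
        mul_le_mul_of_nonneg_right hCz (mul_nonneg hs0 hδ0)
      calc ⟪g w - g z₀, Y u⟫ ≤ ‖g w - g z₀‖ * δ := by rw [hδ]; exact hcs
        _ ≤ Lu * ‖g z₀‖ * (s * δ) := hmid
        _ ≤ C * (s * δ) := h3
        _ = C * s * δ := by ring
    have hkey : 2 * ⟪g (y u) - g z₀, Y u⟫ + μ * gg u ≤ C^2 * s^2 / μ := by
      rw [hggδ, hsplit]
      have hy2 : -μ*δ^2 + 2*(C*s*δ) ≤ C^2*s^2/μ := by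
        rw [le_div_iff₀ hμ]
        nlinarith [sq_nonneg (μ*δ - C*s)]
      linarith [h1, h2, hy2]
    have hpoly : C^2 * s^2 / μ ≤ ε^2 * ((-μ + μ^2*s + 3*β*s^2) + μ * q u) := by
      rw [hqval, ← hs]
      have heq : ε ^ 2 * (-μ + μ ^ 2 * s + 3 * β * s ^ 2
          + μ * (1 - μ * s + μ ^ 2 * s ^ 2 / 2 + β * s ^ 3))
          = ε^2*(μ^3/2 + 3*β)*s^2 + ε^2*β*μ*s^3 := by ring
      rw [heq]
      have h4 : C^2 * s^2 / μ = (C^2/μ)*s^2 := by ring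
      rw [h4]
      have h5 : (C^2/μ)*s^2 ≤ ε^2*(μ^3/2 + 3*β)*s^2 :=
        mul_le_mul_of_nonneg_right hYoung (sq_nonneg s)
      have h6 : 0 ≤ ε^2*β*μ*s^3 :=
        mul_nonneg (mul_nonneg (mul_nonneg (sq_nonneg ε) hβ) hμ.le) (pow_nonneg hs0 3)
      linarith [h5, h6]
    have hEpos : 0 < Real.exp (μ*s) := Real.exp_pos _
    rw [← hs]
    have hX : ((2 * ⟪g (y u) - g z₀, Y u⟫ - ε^2 * (-μ + μ^2*s + 3*β*s^2))
        + (gg u - ε^2 * q u) * μ) ≤ 0 := by nlinarith [hkey, hpoly]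
    have h9 : ((2 * ⟪g (y u) - g z₀, Y u⟫ - ε^2 * (-μ + μ^2*s + 3*β*s^2))
        + (gg u - ε^2 * q u) * μ) * Real.exp (μ*s) ≤ 0 :=
      mul_nonpos_of_nonpos_of_nonneg hX hEpos.le
    calc (2 * ⟪g (y u) - g z₀, Y u⟫ - ε^2 * (-μ + μ^2*s + 3*β*s^2)) * Real.exp (μ*s)
          + (gg u - ε^2 * q u) * (Real.exp (μ*s) * μ)
        = ((2 * ⟪g (y u) - g z₀, Y u⟫ - ε^2 * (-μ + μ^2*s + 3*β*s^2))
          + (gg u - ε^2 * q u) * μ) * Real.exp (μ*s) := by ring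
      _ ≤ 0 := h9
  -- φ is antitone
  have hanti : AntitoneOn φ (Icc a (a+τ)) := by
    apply antitoneOn_of_deriv_nonpos (convex_Icc a (a+τ))
    · intro u hu
      exact (hφ' u hu).continuousAt.continuousWithinAt
    · intro u hu
      exact ((hφ' u (interior_subset hu)).differentiableAt).differentiableWithinAt
    · intro u hu
      rw [(hφ' u (interior_subset hu)).deriv]
      exact hderiv_nonpos u (interior_subset hu)
  have haI : a ∈ Icc a (a+τ) := ⟨le_refl a, by linarith⟩
  have hφa : φ a ≤ 0 := by
    have hYa : Y a = y a - z₀ := by rw [hYval]; simp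
    have hga : gg a = ‖y a - z₀‖^2 := by rw [hggval, hYa]
    have hqa : q a = 1 := by rw [hqval]; simp
    have hle : gg a - ε^2 * q a ≤ 0 := by
      rw [hga, hqa]; nlinarith [hinit, norm_nonneg (y a - z₀), hε]
    rw [hφval, show μ*(a-a) = 0 by ring, Real.exp_zero, mul_one]
    exact hle
  have hφt : φ t ≤ 0 := le_trans (hanti haI ht ht.1) hφa
  have hs0 : 0 ≤ t - a := by linarith [ht.1]
  have hsτ : t - a ≤ τ := by linarith [ht.2]
  have hq1 : q t ≤ 1 := by
    have hsq : (t-a)^2 ≤ τ^2 := by nlinarith [hs0, hsτ]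
    have h6 : μ^2*(t-a)/2 + β*(t-a)^2 ≤ μ := by
      have := mul_le_mul_of_nonneg_left hsτ (by positivity : (0:ℝ) ≤ μ^2)
      have := mul_le_mul_of_nonneg_left hsq hβ
      linarith [hcon]
    rw [hqval]
    nlinarith [mul_nonneg hs0 (sub_nonneg.mpr h6)]
  have hggt : gg t ≤ ε^2 := by
    have hEpos : 0 < Real.exp (μ*(t-a)) := Real.exp_pos _
    have h7 : gg t - ε^2 * q t ≤ 0 := by
      by_contra h
      push_neg at h
      have := mul_pos h hEpos
      rw [hφval] at hφt
      linarith
    nlinarith [hq1, hε, h7]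
  have hnorm : ‖Y t‖^2 ≤ ε^2 := by rw [← hggval]; exact hggt
  have hfin : ‖Y t‖ ≤ ε := by nlinarith [norm_nonneg (Y t), hε]
  rw [← hYval]
  exact hfin
lemma euler_arith (Cu Gu au lamu ε τ : ℝ) (hε : 0 < ε) (hτ : 0 < τ)
    (hlam : lamu < 0)
    (hG : Gu = Real.sqrt 3 * ε * |lamu| / Cu)
    (hα : au = 1 + |lamu| * Gu / 4 - Real.sqrt (1 + (lamu * Gu / 4) ^ 2))
    (hH₂ : |lamu| * Gu / 4 < 1) (hH₃ : τ ≤ Gu * (1 - au)) :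
    0 < Cu ∧ ∃ β : ℝ, 0 ≤ β ∧ Cu ^ 2 / (-lamu) ≤ ε ^ 2 * ((-lamu) ^ 3 / 2 + 3 * β) ∧
      (-lamu) ^ 2 * τ / 2 + β * τ ^ 2 ≤ -lamu := by
  have hμ : 0 < -lamu := by linarith
  set μ : ℝ := -lamu with hμdef
  have habs : |lamu| = μ := abs_of_neg hlam
  have hsqrt3 : (0:ℝ) < Real.sqrt 3 := Real.sqrt_pos.mpr (by norm_num)
  -- first: Cu > 0
  have hCpos : 0 < Cu := by
    rcases lt_trichotomy Cu 0 with hC | hC | hC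
    · -- Gu < 0, leading to τ ≤ Gu * (1 - au) < 0
      exfalso
      have hGneg : Gu < 0 := by
        rw [hG, habs]
        exact div_neg_of_pos_of_neg (by positivity) hC
      have h1α : 0 < 1 - au := by
        rw [hα]
        have h2 : |lamu| * Gu / 4 < Real.sqrt (1 + (lamu * Gu / 4) ^ 2) := by
          have h3 : |lamu| * Gu / 4 ≤ 0 := by
            apply div_nonpos_of_nonpos_of_nonneg _ (by norm_num)
            exact mul_nonpos_of_nonneg_of_nonpos (abs_nonneg _) hGneg.le
          calc |lamu| * Gu / 4 ≤ 0 := h3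
            _ < Real.sqrt (1 + (lamu * Gu / 4) ^ 2) := Real.sqrt_pos.mpr (by positivity)
        linarith
      nlinarith [mul_pos (neg_pos.mpr hGneg) h1α]
    · exfalso
      have hG0 : Gu = 0 := by rw [hG, hC, div_zero]
      have hα0 : au = 0 := by rw [hα, hG0]; simp
      rw [hG0, hα0] at hH₃
      simp at hH₃; linarith
    · exact hC
  have hGpos : 0 < Gu := by rw [hG, habs]; positivity
  -- notation
  set x : ℝ := μ * Gu / 4 with hxdef
  have hx0 : 0 < x := by positivity
  have hx1 : x < 1 := by rwa [habs] at hH₂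
  set r : ℝ := Real.sqrt (1 + x ^ 2) - x with hrdef
  have hsq : (Real.sqrt (1 + x ^ 2)) ^ 2 = 1 + x ^ 2 := Real.sq_sqrt (by positivity)
  have hr0 : 0 < r := by
    have hlt : x < Real.sqrt (1 + x ^ 2) := (Real.lt_sqrt hx0.le).mpr (by linarith)
    rw [hrdef]; linarith
  have hid : 2 * x * r + r ^ 2 = 1 := by
    rw [hrdef]; linear_combination hsq
  clear_value μ x r
  -- 1 - au = r
  have h1ar : 1 - au = r := by
    rw [hα, habs, hrdef]
    have harg : 1 + (lamu * Gu / 4) ^ 2 = 1 + x ^ 2 := by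
      rw [hxdef, hμdef]; ring
    rw [harg, hxdef]; ring
  have hτG : τ ≤ Gu * r := by rw [← h1ar]; exact hH₃
  -- Cu * Gu = √3 * ε * μ
  have hCG : Cu * Gu = Real.sqrt 3 * ε * μ := by
    rw [hG, habs]
    field_simp
  have hC2G2 : Cu ^ 2 * Gu ^ 2 = 3 * ε ^ 2 * μ ^ 2 := by
    have h3 : (Real.sqrt 3) ^ 2 = 3 := Real.sq_sqrt (by norm_num)
    linear_combination (Cu * Gu + Real.sqrt 3 * ε * μ) * hCG + ε ^ 2 * μ ^ 2 * h3
  -- define β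
  set v : ℝ := (Cu ^ 2 / (μ * ε ^ 2) - μ ^ 3 / 2) / 3 with hvdef
  refine ⟨hCpos, max 0 v, le_max_left _ _, ?_, ?_⟩
  · -- Young condition
    have h7 : Cu ^ 2 / (μ * ε ^ 2) - μ ^ 3 / 2 ≤ 3 * max 0 v := by
      have : v ≤ max 0 v := le_max_right _ _
      rw [hvdef] at this; linarith
    have h8 : Cu ^ 2 / μ = ε ^ 2 * (Cu ^ 2 / (μ * ε ^ 2)) := by
      field_simp
    rw [h8]
    nlinarith [h7, sq_nonneg ε, hε]
  · -- stability condition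
    rcases le_or_gt v 0 with hv | hv
    · rw [max_eq_left hv]
      -- need μ^2 * τ / 2 ≤ μ, i.e. μ * τ ≤ 2
      have hμτ : μ * τ ≤ 2 := by
        have h9 : μ * τ ≤ μ * (Gu * r) := mul_le_mul_of_nonneg_left hτG hμ.le
        have h10 : μ * (Gu * r) = 4 * x * r := by rw [hxdef]; ring
        -- 4 x r ≤ 2 since x < 1
        have h11 : 4 * x * r ≤ 2 := by
          rw [hrdef]
          nlinarith [sq_nonneg (2 * x - Real.sqrt (1 + x ^ 2)), hsq, hx0, hx1]
        linarith [h9, h10 ▸ h9]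
      nlinarith [hμτ, hμ, hτ]
    · rw [max_eq_right hv.le]
      -- v * Gu^2 = μ - μ^3 * Gu^2 / 6
      have hvG : v * Gu ^ 2 = μ - μ ^ 3 * Gu ^ 2 / 6 := by
        rw [hvdef]
        have h12 : Cu ^ 2 / (μ * ε ^ 2) = 3 * μ / Gu ^ 2 := by
          rw [div_eq_div_iff (by positivity) (by positivity)]
          nlinarith [hC2G2]
        rw [h12]
        field_simp
        ring
      have hmono : μ ^ 2 * τ / 2 + v * τ ^ 2 ≤ μ ^ 2 * (Gu * r) / 2 + v * (Gu * r) ^ 2 := by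
        have hτ2 : τ ^ 2 ≤ (Gu * r) ^ 2 := by nlinarith [hτ, hτG]
        have := mul_le_mul_of_nonneg_left hτ2 hv.le
        nlinarith [mul_le_mul_of_nonneg_left hτG (by positivity : (0:ℝ) ≤ μ ^ 2)]
      have hid' : μ * Gu / 2 * r + r ^ 2 = 1 := by
        rw [show μ * Gu / 2 = 2 * x by rw [hxdef]; ring]; exact hid
      have hkey : μ ^ 2 * (Gu * r) / 2 + v * (Gu * r) ^ 2 = μ - μ ^ 3 * (Gu * r) ^ 2 / 6 := by
        linear_combination (r ^ 2) * hvG + μ * hid'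
      have hfin : μ - μ ^ 3 * (Gu * r) ^ 2 / 6 ≤ μ := by
        have : 0 ≤ μ ^ 3 * (Gu * r) ^ 2 / 6 := by positivity
        linarith
      linarith [hmono, hkey ▸ hmono, hfin, hkey.le, hkey.ge]

/-- Theorem 2 (Robustness): under hypothesis (H), the exact piecewise solution
under a pattern `pat = u₁⋯u_k` and the corresponding piecewise-linear Euler
trajectory stay within distance `ε` on the whole horizon `[0, kτ]`. -/
theorem robustness_piecewise_euler {M : ℕ} {U : Type*} [Fintype U]
    (S : Set (EuclideanSpace ℝ (Fin M)))
    (hSconv : Convex ℝ S) (hScomp : IsCompact S)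
    (f : U → EuclideanSpace ℝ (Fin M) → EuclideanSpace ℝ (Fin M))
    (L lam C G α : U → ℝ) (ε τ : ℝ) (hε : 0 < ε)
    (hLip : ∀ u, ∀ y₁ ∈ S, ∀ y₂ ∈ S, ‖f u y₁ - f u y₂‖ ≤ L u * ‖y₁ - y₂‖)
    (hOSL : ∀ u, ∀ y₁ ∈ S, ∀ y₂ ∈ S,
      ⟪f u y₁ - f u y₂, y₁ - y₂⟫ ≤ lam u * ‖y₁ - y₂‖ ^ 2)
    (hC : ∀ u, IsLUB ((fun y => L u * ‖f u y‖) '' S) (C u))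
    (hG : ∀ u, G u = Real.sqrt 3 * ε * |lam u| / C u)
    (hα : ∀ u, α u = 1 + |lam u| * G u / 4 -
      Real.sqrt (1 + (lam u * G u / 4) ^ 2))
    -- hypothesis (H)
    (hH₁ : ∀ u, lam u < 0) (hH₂ : ∀ u, |lam u| * G u / 4 < 1)
    (hH₃ : ∀ u, τ ≤ G u * (1 - α u))
    -- the pattern and the exact piecewise solution
    (k : ℕ) (pat : Fin k → U)
    (y : ℝ → EuclideanSpace ℝ (Fin M))
    (hyS : ∀ t ∈ Icc (0 : ℝ) (k * τ), y t ∈ S)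
    (hy' : ∀ n : Fin k, ∀ t ∈ Icc ((n : ℝ) * τ) (((n : ℝ) + 1) * τ),
      HasDerivAt y (f (pat n) (y t)) t)
    -- the piecewise-linear Euler trajectory
    (z : ℕ → EuclideanSpace ℝ (Fin M))
    (hzrec : ∀ n : Fin k, z (n + 1) = z n + τ • f (pat n) (z n))
    (ytil : ℝ → EuclideanSpace ℝ (Fin M))
    (hytil0 : ytil 0 = z 0)
    (hytil : ∀ n : Fin k, ∀ t ∈ Icc ((n : ℝ) * τ) (((n : ℝ) + 1) * τ),
      ytil t = z n + (t - (n : ℝ) * τ) • f (pat n) (z n))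
    (hytilS : ∀ t ∈ Icc (0 : ℝ) (k * τ), ytil t ∈ S)
    -- initial conditions `ε`-close
    (h0 : ‖y 0 - z 0‖ ≤ ε) :
    ∀ t ∈ Icc (0 : ℝ) (k * τ), ‖y t - ytil t‖ ≤ ε := by

  intro t ht
  rcases le_or_gt τ 0 with hτ | hτpos
  · -- degenerate horizon
    have hk0 : (k : ℝ) * τ ≤ 0 := by
      have : (0:ℝ) ≤ (k:ℝ) := Nat.cast_nonneg k
      nlinarith
    have ht0 : t = 0 := le_antisymm (le_trans ht.2 hk0) ht.1
    rw [ht0, hytil0]; exact h0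
  -- main case
  -- single interval step
  have hstep : ∀ n : Fin k, ‖y ((n : ℝ) * τ) - z n‖ ≤ ε →
      ∀ s ∈ Icc ((n : ℝ) * τ) (((n : ℝ) + 1) * τ),
        ‖y s - (z n + (s - (n : ℝ) * τ) • f (pat n) (z n))‖ ≤ ε := by
    intro n hinit
    obtain ⟨hCpos, β, hβ0, hYoung, hcon⟩ :=
      euler_arith (C (pat n)) (G (pat n)) (α (pat n)) (lam (pat n)) ε τ hε hτpos
        (hH₁ _) (hG _) (hα _) (hH₂ _) (hH₃ _)
    have hn1k : (n : ℕ) + 1 ≤ k := n.isLt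
    have hn1kR : ((n : ℝ) + 1) ≤ (k : ℝ) := by exact_mod_cast hn1k
    have hsub : Icc ((n : ℝ) * τ) (((n : ℝ) + 1) * τ) ⊆ Icc (0:ℝ) ((k:ℝ) * τ) := by
      intro s hs
      have hn0 : (0:ℝ) ≤ (n:ℝ) := Nat.cast_nonneg _
      constructor
      · nlinarith [hs.1]
      · nlinarith [hs.2, mul_le_mul_of_nonneg_right hn1kR hτpos.le]
    have hmem0 : ((n:ℝ) * τ) ∈ Icc ((n : ℝ) * τ) (((n : ℝ) + 1) * τ) :=
      ⟨le_refl _, by nlinarith⟩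
    have hznS : z n ∈ S := by
      have h1 := hytil n _ hmem0
      have h2 := hytilS _ (hsub hmem0)
      rw [h1] at h2
      simpa using h2
    have hIcc : Icc ((n:ℝ) * τ) ((n:ℝ) * τ + τ) = Icc ((n : ℝ) * τ) (((n : ℝ) + 1) * τ) := by
      rw [show (n:ℝ) * τ + τ = ((n:ℝ) + 1) * τ by ring]
    have hOSL' : ∀ y₁ ∈ S, ∀ y₂ ∈ S,
        ⟪f (pat n) y₁ - f (pat n) y₂, y₁ - y₂⟫ ≤ (-(-(lam (pat n)))) * ‖y₁ - y₂‖ ^ 2 := by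
      intro y₁ h₁ y₂ h₂
      rw [neg_neg]
      exact hOSL (pat n) y₁ h₁ y₂ h₂
    have hCz : L (pat n) * ‖f (pat n) (z n)‖ ≤ C (pat n) :=
      (hC (pat n)).1 (mem_image_of_mem _ hznS)
    have happ := euler_step (S := S) (f (pat n)) (L (pat n)) (C (pat n)) (-(lam (pat n))) β ε τ
      ((n:ℝ) * τ) hε (by linarith [hH₁ (pat n)]) hβ0 (hLip (pat n)) hOSL' (z n) hznS hCz
      hYoung hcon y
      (by rw [hIcc]; exact fun s hs => hyS s (hsub hs))
      (by rw [hIcc]; exact hy' n)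
      (by
        rw [hIcc]
        intro s hs
        have h1 := hytil n s hs
        have h2 := hytilS s (hsub hs)
        rwa [h1] at h2)
      hinit
    intro s hs
    exact happ s (hIcc ▸ hs)
  -- induction along the pattern
  have hinv : ∀ n : ℕ, n ≤ k → ‖y ((n : ℝ) * τ) - z n‖ ≤ ε := by
    intro n
    induction n with
    | zero => intro _; simpa using h0
    | succ m ih =>
      intro hmk
      have hm : m < k := hmk
      have ihm := ih (Nat.le_of_lt hm)
      have hcast : (((⟨m, hm⟩ : Fin k) : ℝ)) = (m : ℝ) := by simp
      have happ := hstep ⟨m, hm⟩ (by rw [hcast]; exact ihm) (((m:ℝ) + 1) * τ)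
        (by rw [hcast]; exact ⟨by nlinarith [Nat.cast_nonneg (α := ℝ) m], le_refl _⟩)
      rw [hcast] at happ
      have hsimp : ((m:ℝ) + 1) * τ - (m:ℝ) * τ = τ := by ring
      rw [hsimp] at happ
      have hz : z (m + 1) = z m + τ • f (pat ⟨m, hm⟩) (z m) := by
        have := hzrec ⟨m, hm⟩
        simpa using this
      rw [← hz] at happ
      have : ((m + 1 : ℕ) : ℝ) = (m : ℝ) + 1 := by push_cast; ring
      rw [this]
      exact happ
  -- conclude for arbitrary t
  rcases Nat.eq_zero_or_pos k with hk0 | hkpos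
  · subst hk0
    have ht0 : t = 0 := by simpa using ht
    rw [ht0, hytil0]; exact h0
  · set n : ℕ := min (Nat.floor (t / τ)) (k - 1) with hndef
    have hnk : n < k := lt_of_le_of_lt (min_le_right _ _) (Nat.sub_lt hkpos one_pos)
    have ht0 : 0 ≤ t := ht.1
    have hdiv0 : 0 ≤ t / τ := div_nonneg ht0 hτpos.le
    have h1 : (n : ℝ) * τ ≤ t := by
      have hn_le : (n : ℝ) ≤ t / τ := by
        have h2 : (n : ℕ) ≤ Nat.floor (t / τ) := min_le_left _ _
        have h3 : ((Nat.floor (t / τ) : ℕ) : ℝ) ≤ t / τ := Nat.floor_le hdiv0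
        calc (n:ℝ) ≤ ((Nat.floor (t / τ) : ℕ) : ℝ) := by exact_mod_cast h2
          _ ≤ t / τ := h3
      calc (n : ℝ) * τ ≤ (t / τ) * τ := mul_le_mul_of_nonneg_right hn_le hτpos.le
        _ = t := by field_simp
    have h2 : t ≤ ((n : ℝ) + 1) * τ := by
      rcases le_total (Nat.floor (t / τ)) (k - 1) with h | h
      · have hn : n = Nat.floor (t / τ) := min_eq_left h
        have h4 : t / τ < (Nat.floor (t / τ) : ℝ) + 1 := Nat.lt_floor_add_one _
        have h5 : t < ((Nat.floor (t / τ) : ℝ) + 1) * τ := by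
          have := mul_lt_mul_of_pos_right h4 hτpos
          rwa [div_mul_cancel₀ t (ne_of_gt hτpos)] at this
        rw [hn]
        exact h5.le
      · have hn : n = k - 1 := min_eq_right h
        have h6 : ((k - 1 : ℕ) : ℝ) = (k : ℝ) - 1 := by
          have h7 : 1 ≤ k := hkpos
          push_cast [Nat.cast_sub h7]
          ring
        rw [hn, h6, show ((k:ℝ) - 1 + 1) * τ = (k:ℝ) * τ by ring]
        exact ht.2
    have hcast : (((⟨n, hnk⟩ : Fin k) : ℝ)) = (n : ℝ) := by simp
    have happ := hstep ⟨n, hnk⟩ (by rw [hcast]; exact hinv n hnk.le) t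
      (by rw [hcast]; exact ⟨h1, h2⟩)
    rw [hcast] at happ
    have hyt : ytil t = z n + (t - (n : ℝ) * τ) • f (pat ⟨n, hnk⟩) (z n) := by
      have := hytil ⟨n, hnk⟩ t (by rw [hcast]; exact ⟨h1, h2⟩)
      rwa [hcast] at this
    rw [hyt]
    exact happ
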